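/- Work in R = MvPolynomial (Fin 3) ℂ with variables x, y, z and partial derivative operators ∂_x, ∂_y, ∂_z (pderiv). Fix a, b ∈ ℕ and r ∈ ℂ, and define the ℂ-linear operators on R: a₁(p) = ∂_x p − y²·∂_y p − y·z·∂_z p + b·y·p; a₂(p) = x²·∂_x p − ∂_y p − r·x·z·∂_z p − a·x·p; a₃(p) = 2·∂_x p − 2·y·∂_y p − (r+1)·z·∂_z p + (b−a)·p; a₄(p) = (r−1)·z·∂_z p + (a+b)·p. Then the ℂ-submodule of R spanned by the monomials x^i·y^j with 0 ≤ i ≤ a and 0 ≤ j ≤ b is nonzero, finite-dimensional, and mapped into itself by each of a₁, a₂, a₃, a₄. -/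
import Mathlib


open MvPolynomial

/-- `a₁(p) = ∂ₓ p − y²·∂_y p − y·z·∂_z p + b·y·p`. -/
noncomputable def qcOp1 (b : ℕ) (p : MvPolynomial (Fin 3) ℂ) : MvPolynomial (Fin 3) ℂ :=
  pderiv 0 p - X 1 ^ 2 * pderiv 1 p - X 1 * X 2 * pderiv 2 p + C (b : ℂ) * X 1 * p

/-- `a₂(p) = x²·∂ₓ p − ∂_y p − r·x·z·∂_z p − a·x·p`. -/
noncomputable def qcOp2 (a : ℕ) (r : ℂ) (p : MvPolynomial (Fin 3) ℂ) :
    MvPolynomial (Fin 3) ℂ :=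
  X 0 ^ 2 * pderiv 0 p - pderiv 1 p - C r * X 0 * X 2 * pderiv 2 p - C (a : ℂ) * X 0 * p

/-- `a₃(p) = 2·∂ₓ p − 2·y·∂_y p − (r+1)·z·∂_z p + (b−a)·p`. -/
noncomputable def qcOp3 (a b : ℕ) (r : ℂ) (p : MvPolynomial (Fin 3) ℂ) :
    MvPolynomial (Fin 3) ℂ :=
  2 * pderiv 0 p - 2 * X 1 * pderiv 1 p - C (r + 1) * X 2 * pderiv 2 p
    + C ((b : ℂ) - (a : ℂ)) * p

/-- `a₄(p) = (r−1)·z·∂_z p + (a+b)·p`. -/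
noncomputable def qcOp4 (a b : ℕ) (r : ℂ) (p : MvPolynomial (Fin 3) ℂ) :
    MvPolynomial (Fin 3) ℂ :=
  C (r - 1) * X 2 * pderiv 2 p + C ((a : ℂ) + (b : ℂ)) * p


namespace QCaux

lemma pd0 (i j : ℕ) : pderiv 0 (X 0 ^ i * X 1 ^ j : MvPolynomial (Fin 3) ℂ)
    = (i : ℂ) • (X 0 ^ (i - 1) * X 1 ^ j) := by
  simp [pderiv_mul, Derivation.leibniz_pow, pderiv_X_self, pderiv_X_of_ne, smul_eq_C_mul]; ring

lemma pd1 (i j : ℕ) : pderiv 1 (X 0 ^ i * X 1 ^ j : MvPolynomial (Fin 3) ℂ)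
    = (j : ℂ) • (X 0 ^ i * X 1 ^ (j - 1)) := by
  simp [pderiv_mul, Derivation.leibniz_pow, pderiv_X_self, pderiv_X_of_ne, smul_eq_C_mul]; ring

lemma pd2 (i j : ℕ) : pderiv 2 (X 0 ^ i * X 1 ^ j : MvPolynomial (Fin 3) ℂ) = 0 := by
  simp [pderiv_mul, Derivation.leibniz_pow, pderiv_X_self, pderiv_X_of_ne]

lemma smul_mem' {N : Submodule ℂ (MvPolynomial (Fin 3) ℂ)} {c : ℂ}
    {v : MvPolynomial (Fin 3) ℂ} (h : c = 0 ∨ v ∈ N) : c • v ∈ N := by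
  rcases h with rfl | h
  · simp
  · exact N.smul_mem _ h

lemma op1_eq (b i j : ℕ) : qcOp1 b (X 0 ^ i * X 1 ^ j)
    = (i : ℂ) • (X 0 ^ (i - 1) * X 1 ^ j) + ((b : ℂ) - (j : ℂ)) • (X 0 ^ i * X 1 ^ (j + 1)) := by
  rw [qcOp1, pd0, pd1, pd2]
  cases j with
  | zero => simp [smul_eq_C_mul]; ring
  | succ j => simp [smul_eq_C_mul]; ring

lemma op2_eq (a : ℕ) (r : ℂ) (i j : ℕ) : qcOp2 a r (X 0 ^ i * X 1 ^ j)
    = ((i : ℂ) - (a : ℂ)) • (X 0 ^ (i + 1) * X 1 ^ j) + (-(j : ℂ)) • (X 0 ^ i * X 1 ^ (j - 1)) := by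
  rw [qcOp2, pd0, pd1, pd2]
  cases i with
  | zero => simp [smul_eq_C_mul]; ring
  | succ i => simp [smul_eq_C_mul]; ring

lemma op3_eq (a b : ℕ) (r : ℂ) (i j : ℕ) : qcOp3 a b r (X 0 ^ i * X 1 ^ j)
    = (2 * (i : ℂ)) • (X 0 ^ (i - 1) * X 1 ^ j)
      + ((b : ℂ) - (a : ℂ) - 2 * (j : ℂ)) • (X 0 ^ i * X 1 ^ j) := by
  rw [qcOp3, pd0, pd1, pd2]
  have h2 : (2 : MvPolynomial (Fin 3) ℂ) = C 2 := (map_ofNat C 2).symm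
  rw [h2]
  cases j with
  | zero => simp [smul_eq_C_mul]; ring
  | succ j => simp [smul_eq_C_mul]; ring

lemma op4_eq (a b : ℕ) (r : ℂ) (i j : ℕ) : qcOp4 a b r (X 0 ^ i * X 1 ^ j)
    = ((a : ℂ) + (b : ℂ)) • (X 0 ^ i * X 1 ^ j) := by
  rw [qcOp4, pd2]
  simp [smul_eq_C_mul]

lemma op1_lin (b : ℕ) (c : ℂ) (p q : MvPolynomial (Fin 3) ℂ) :
    qcOp1 b 0 = 0 ∧ qcOp1 b (p + q) = qcOp1 b p + qcOp1 b q ∧ qcOp1 b (c • p) = c • qcOp1 b p := by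
  refine ⟨by simp [qcOp1], by simp [qcOp1]; ring, ?_⟩
  simp only [qcOp1, smul_eq_C_mul, pderiv_C_mul]; ring

lemma op2_lin (a : ℕ) (r : ℂ) (c : ℂ) (p q : MvPolynomial (Fin 3) ℂ) :
    qcOp2 a r 0 = 0 ∧ qcOp2 a r (p + q) = qcOp2 a r p + qcOp2 a r q ∧
      qcOp2 a r (c • p) = c • qcOp2 a r p := by
  refine ⟨by simp [qcOp2], by simp [qcOp2]; ring, ?_⟩
  simp only [qcOp2, smul_eq_C_mul, pderiv_C_mul]; ring

lemma op3_lin (a b : ℕ) (r : ℂ) (c : ℂ) (p q : MvPolynomial (Fin 3) ℂ) :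
    qcOp3 a b r 0 = 0 ∧ qcOp3 a b r (p + q) = qcOp3 a b r p + qcOp3 a b r q ∧
      qcOp3 a b r (c • p) = c • qcOp3 a b r p := by
  refine ⟨by simp [qcOp3], by simp [qcOp3]; ring, ?_⟩
  simp only [qcOp3, smul_eq_C_mul, pderiv_C_mul]; ring

lemma op4_lin (a b : ℕ) (r : ℂ) (c : ℂ) (p q : MvPolynomial (Fin 3) ℂ) :
    qcOp4 a b r 0 = 0 ∧ qcOp4 a b r (p + q) = qcOp4 a b r p + qcOp4 a b r q ∧
      qcOp4 a b r (c • p) = c • qcOp4 a b r p := by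
  refine ⟨by simp [qcOp4], by simp [qcOp4]; ring, ?_⟩
  simp only [qcOp4, smul_eq_C_mul, pderiv_C_mul]; ring

end QCaux

namespace QCaux

variable {a b : ℕ}

lemma gen_mem {i j : ℕ} (hi : i ≤ a) (hj : j ≤ b) :
    (X 0 ^ i * X 1 ^ j : MvPolynomial (Fin 3) ℂ) ∈ Submodule.span ℂ
      {p : MvPolynomial (Fin 3) ℂ | ∃ i j : ℕ, i ≤ a ∧ j ≤ b ∧ p = X 0 ^ i * X 1 ^ j} :=
  Submodule.subset_span ⟨i, j, hi, hj, rfl⟩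

end QCaux

open QCaux in
/-- The span of the monomials `x^i·y^j`, `0 ≤ i ≤ a`, `0 ≤ j ≤ b`, is a nonzero,
finite-dimensional subspace invariant under the four operators `a₁, a₂, a₃, a₄` of
Example 1. -/
theorem monomial_span_invariant_counterexample1 (a b : ℕ) (r : ℂ) :
    Submodule.span ℂ {p : MvPolynomial (Fin 3) ℂ |
        ∃ i j : ℕ, i ≤ a ∧ j ≤ b ∧ p = X 0 ^ i * X 1 ^ j} ≠ ⊥ ∧
    FiniteDimensional ℂ (Submodule.span ℂ {p : MvPolynomial (Fin 3) ℂ |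
        ∃ i j : ℕ, i ≤ a ∧ j ≤ b ∧ p = X 0 ^ i * X 1 ^ j}) ∧
    ∀ p ∈ Submodule.span ℂ {p : MvPolynomial (Fin 3) ℂ |
        ∃ i j : ℕ, i ≤ a ∧ j ≤ b ∧ p = X 0 ^ i * X 1 ^ j},
      qcOp1 b p ∈ Submodule.span ℂ {p : MvPolynomial (Fin 3) ℂ |
        ∃ i j : ℕ, i ≤ a ∧ j ≤ b ∧ p = X 0 ^ i * X 1 ^ j} ∧
      qcOp2 a r p ∈ Submodule.span ℂ {p : MvPolynomial (Fin 3) ℂ |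
        ∃ i j : ℕ, i ≤ a ∧ j ≤ b ∧ p = X 0 ^ i * X 1 ^ j} ∧
      qcOp3 a b r p ∈ Submodule.span ℂ {p : MvPolynomial (Fin 3) ℂ |
        ∃ i j : ℕ, i ≤ a ∧ j ≤ b ∧ p = X 0 ^ i * X 1 ^ j} ∧
      qcOp4 a b r p ∈ Submodule.span ℂ {p : MvPolynomial (Fin 3) ℂ |
        ∃ i j : ℕ, i ≤ a ∧ j ≤ b ∧ p = X 0 ^ i * X 1 ^ j} := by

  set S : Set (MvPolynomial (Fin 3) ℂ) :=
    {p : MvPolynomial (Fin 3) ℂ | ∃ i j : ℕ, i ≤ a ∧ j ≤ b ∧ p = X 0 ^ i * X 1 ^ j} with hS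
  set N := Submodule.span ℂ S with hN
  refine ⟨?_, ?_, ?_⟩
  · -- nonzero
    intro h
    have h1 : (1 : MvPolynomial (Fin 3) ℂ) ∈ N := by
      have := gen_mem (a := a) (b := b) (Nat.zero_le a) (Nat.zero_le b)
      simpa only [pow_zero, mul_one] using this
    rw [h, Submodule.mem_bot] at h1
    exact one_ne_zero h1
  · -- finite-dimensional
    have hfin : S.Finite := by
      have : S ⊆ (fun ij : ℕ × ℕ => (X 0 ^ ij.1 * X 1 ^ ij.2 : MvPolynomial (Fin 3) ℂ)) ''
          (Set.Iic a ×ˢ Set.Iic b) := by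
        rintro p ⟨i, j, hi, hj, rfl⟩
        exact ⟨(i, j), ⟨hi, hj⟩, rfl⟩
      exact Set.Finite.subset (((Set.finite_Iic a).prod (Set.finite_Iic b)).image _) this
    exact FiniteDimensional.span_of_finite ℂ hfin
  · -- invariance
    intro p hp
    refine Submodule.span_induction
      (p := fun p _ => qcOp1 b p ∈ N ∧ qcOp2 a r p ∈ N ∧ qcOp3 a b r p ∈ N ∧ qcOp4 a b r p ∈ N)
      ?_ ?_ ?_ ?_ hp
    · rintro q ⟨i, j, hi, hj, rfl⟩
      refine ⟨?_, ?_, ?_, ?_⟩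
      · rw [op1_eq]
        refine N.add_mem (smul_mem' ?_) (smul_mem' ?_)
        · exact Or.inr (gen_mem (le_trans (Nat.sub_le i 1) hi) hj)
        · rcases eq_or_lt_of_le hj with rfl | h
          · exact Or.inl (sub_self _)
          · exact Or.inr (gen_mem hi h)
      · rw [op2_eq]
        refine N.add_mem (smul_mem' ?_) (smul_mem' ?_)
        · rcases eq_or_lt_of_le hi with rfl | h
          · exact Or.inl (sub_self _)
          · exact Or.inr (gen_mem h hj)
        · exact Or.inr (gen_mem hi (le_trans (Nat.sub_le j 1) hj))
      · rw [op3_eq]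
        exact N.add_mem (N.smul_mem _ (gen_mem (le_trans (Nat.sub_le i 1) hi) hj))
          (N.smul_mem _ (gen_mem hi hj))
      · rw [op4_eq]
        exact N.smul_mem _ (gen_mem hi hj)
    · refine ⟨?_, ?_, ?_, ?_⟩ <;>
        simp [(op1_lin b 0 0 0).1, (op2_lin a r 0 0 0).1, (op3_lin a b r 0 0 0).1,
          (op4_lin a b r 0 0 0).1]
    · rintro x y hx hy ⟨h1, h2, h3, h4⟩ ⟨g1, g2, g3, g4⟩
      exact ⟨by rw [(op1_lin b 0 x y).2.1]; exact N.add_mem h1 g1,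
        by rw [(op2_lin a r 0 x y).2.1]; exact N.add_mem h2 g2,
        by rw [(op3_lin a b r 0 x y).2.1]; exact N.add_mem h3 g3,
        by rw [(op4_lin a b r 0 x y).2.1]; exact N.add_mem h4 g4⟩
    · rintro c x hx ⟨h1, h2, h3, h4⟩
      exact ⟨by rw [(op1_lin b c x 0).2.2]; exact N.smul_mem _ h1,
        by rw [(op2_lin a r c x 0).2.2]; exact N.smul_mem _ h2,
        by rw [(op3_lin a b r c x 0).2.2]; exact N.smul_mem _ h3,
        by rw [(op4_lin a b r c x 0).2.2]; exact N.smul_mem _ h4⟩
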